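/- arXiv:2403.08522 — 2 statements merged into one kernel-verified Lean document; each statement's English description precedes it below -/
import Mathlib

section
/- Let α be a finite alphabet with cardinality a ≥ 2, and let (V, δ, 𝔰) be a deterministic partial automaton over α. Fix d ∈ (0,1) and a real number λ with λ > a^(−d). Assume: (i) every state reachable from 𝔰 (every t with reach 𝔰 w = some t for some word w) has out-degree at least 1; and (ii) there exists K such that every word w accepted from 𝔰 with w.length ≥ K satisfies: reach 𝔰 w = some t with out-degree of t at least λ·a. Then there exist a real d' > 1 − d and c > 0 such that for every L ∈ ℕ, the number of words of length L accepted from 𝔰 is at least c·a^(d'·L); in particular the accepted language has A-density d' for every infinite A ⊆ ℕ. -/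
/-- The run map of a deterministic partial automaton. -/
def reach {V α : Type*} (δ : V → α → Option V) : V → List α → Option V
  | v, [] => some v
  | v, x :: w => (δ v x).bind fun u => reach δ u w

/-- The out-degree of a state `v`: the number of letters on which a transition
from `v` is defined. -/
noncomputable def outDeg {V α : Type*} [Fintype α] (δ : V → α → Option V) (v : V) : ℕ :=
  open Classical in (Finset.univ.filter fun x : α => δ v x ≠ none).card

/-- The number of words of length `L` in the language `𝓛` (words of length `L`
identified with functions `Fin L → α`). -/
noncomputable def langCount {α : Type*} [Fintype α] (𝓛 : Set (List α)) (L : ℕ) : ℕ :=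
  open Classical in
  (Finset.univ.filter fun f : Fin L → α => List.ofFn f ∈ 𝓛).card

/-- A language `𝓛` over the finite alphabet `α` has `A`-density `d` if for some
`c > 0`, `𝓛` contains at least `c·|α|^(d·L)` words of length `L` for each `L ∈ A`. -/
def HasADensity {α : Type*} [Fintype α] (A : Set ℕ) (d : ℝ) (𝓛 : Set (List α)) : Prop :=
  ∃ c : ℝ, 0 < c ∧ ∀ L ∈ A,
    c * (Fintype.card α : ℝ) ^ (d * (L : ℝ)) ≤ (langCount 𝓛 L : ℝ)

lemma reach_append {V α : Type*} (δ : V → α → Option V) (v : V) (w w' : List α) :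
    reach δ v (w ++ w') = (reach δ v w).bind fun t => reach δ t w' := by
  induction w generalizing v with
  | nil => simp [reach]
  | cons x w ih =>
    simp only [List.cons_append, reach]
    cases δ v x <;> simp [ih]

lemma ofFn_snoc' {α : Type*} {L : ℕ} (f : Fin L → α) (x : α) :
    List.ofFn (Fin.snoc f x) = List.ofFn f ++ [x] := by
  rw [List.ofFn_succ' (Fin.snoc f x)]
  simp [List.concat_eq_append]

/-- Key counting step: if every accepted word of length `L` leads to a state of
out-degree at least `b`, then the count of accepted words grows by a factor `b`. -/
lemma step_count {α V : Type*} [Fintype α] (δ : V → α → Option V) (𝔰 : V) (b L : ℕ)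
    (h : ∀ f : Fin L → α, ∀ t, reach δ 𝔰 (List.ofFn f) = some t → b ≤ outDeg δ t) :
    b * langCount {w : List α | reach δ 𝔰 w ≠ none} L ≤
      langCount {w : List α | reach δ 𝔰 w ≠ none} (L + 1) := by
  classical
  set 𝓛 : Set (List α) := {w : List α | reach δ 𝔰 w ≠ none} with h𝓛
  set F : Finset (Fin L → α) := Finset.univ.filter fun f => List.ofFn f ∈ 𝓛 with hF
  set G : Finset (Fin (L + 1) → α) := Finset.univ.filter fun f => List.ofFn f ∈ 𝓛 with hG
  set E : Finset ((Fin L → α) × α) :=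
    Finset.univ.filter fun p => List.ofFn (Fin.snoc p.1 p.2) ∈ 𝓛 with hE
  have hcountL : langCount 𝓛 L = F.card := by
    unfold langCount; congr 1; exact Finset.filter_congr_decidable _ _ _
  have hcountL1 : langCount 𝓛 (L + 1) = G.card := by
    unfold langCount; congr 1; exact Finset.filter_congr_decidable _ _ _
  rw [hcountL, hcountL1]
  have hEG : E.card ≤ G.card := by
    apply Finset.card_le_card_of_injOn (fun p => Fin.snoc p.1 p.2)
    · intro p hp
      simp only [hE, Finset.mem_filter, Finset.mem_univ, true_and] at hp
      simp only [hG, Finset.mem_filter, Finset.mem_univ, true_and]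
      simpa using hp
    · intro p _ q _ hpq
      have h1 : p.1 = q.1 := by
        have := congrArg Fin.init hpq
        simpa [Fin.init_snoc] using this
      have h2 : p.2 = q.2 := by
        have := congrArg (fun g : Fin (L + 1) → α => g (Fin.last L)) hpq
        simpa [Fin.snoc_last] using this
      exact Prod.ext h1 h2
  refine le_trans ?_ hEG
  have hfst : ∀ p ∈ E, p.1 ∈ F := by
    intro p hp
    simp only [hE, Finset.mem_filter, Finset.mem_univ, true_and] at hp
    simp only [hF, Finset.mem_filter, Finset.mem_univ, true_and]
    have : List.ofFn (Fin.snoc p.1 p.2) ∈ 𝓛 := hp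
    simp only [h𝓛, Set.mem_setOf_eq, ofFn_snoc', reach_append] at this ⊢
    intro hnone
    rw [hnone] at this
    simp at this
  have hsum : E.card = ∑ f ∈ F, (E.filter fun p => p.1 = f).card :=
    Finset.card_eq_sum_card_fiberwise hfst
  have hfiber : ∀ f ∈ F, b ≤ (E.filter fun p => p.1 = f).card := by
    intro f hf
    simp only [hF, Finset.mem_filter, Finset.mem_univ, true_and, h𝓛,
      Set.mem_setOf_eq] at hf
    obtain ⟨t, ht⟩ := Option.ne_none_iff_exists'.mp hf
    have hb := h f t ht
    have hdeg : outDeg δ t ≤ (E.filter fun p => p.1 = f).card := by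
      unfold outDeg
      apply Finset.card_le_card_of_injOn (fun x => (f, x))
      · intro x hx
        simp only [Finset.mem_coe, Finset.mem_filter, Finset.mem_univ, true_and] at hx
        refine Finset.mem_filter.mpr ⟨Finset.mem_filter.mpr ⟨Finset.mem_univ _, ?_⟩, rfl⟩
        show List.ofFn (Fin.snoc f x) ∈ 𝓛
        simp only [h𝓛, Set.mem_setOf_eq, ofFn_snoc', reach_append, ht]
        simp only [Option.bind_some, reach]
        cases hδ : δ t x with
        | none => exact absurd hδ hx
        | some u => simp [reach]
      · intro x _ y _ hxy
        exact congrArg Prod.snd hxy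
    exact le_trans hb hdeg
  calc b * F.card = ∑ _f ∈ F, b := by rw [Finset.sum_const, smul_eq_mul, mul_comm]
    _ ≤ ∑ f ∈ F, (E.filter fun p => p.1 = f).card := Finset.sum_le_sum hfiber
    _ = E.card := hsum.symm

/-- an automaton over an alphabet of size `a ≥ 2` in which every
reachable state has out-degree `≥ 1` and, eventually (for words of length `≥ K`),
out-degree `≥ λ·a` with `λ > a^(−d)`, has accepted language (counted by length)
of size at least `c·a^(d'·L)` for some `d' > 1 − d` and `c > 0`; in particular the
accepted language has `A`-density `d'` for every infinite `A ⊆ ℕ`. -/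
theorem stmt7 {α V : Type*} [Fintype α] (a : ℕ) (hcard : Fintype.card α = a)
    (ha : 2 ≤ a) (δ : V → α → Option V) (𝔰 : V) (d lam : ℝ)
    (hd : d ∈ Set.Ioo (0 : ℝ) 1) (hlam : (a : ℝ) ^ (-d) < lam)
    (hreach : ∀ (w : List α) (t : V), reach δ 𝔰 w = some t → 1 ≤ outDeg δ t)
    (hlarge : ∃ K : ℕ, ∀ (w : List α) (t : V), K ≤ w.length →
      reach δ 𝔰 w = some t → lam * a ≤ (outDeg δ t : ℝ)) :
    ∃ d' : ℝ, 1 - d < d' ∧ ∃ c : ℝ, 0 < c ∧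
      (∀ L : ℕ, c * (a : ℝ) ^ (d' * (L : ℝ)) ≤
        (langCount {w : List α | reach δ 𝔰 w ≠ none} L : ℝ)) ∧
      (∀ A : Set ℕ, A.Infinite →
        HasADensity A d' {w : List α | reach δ 𝔰 w ≠ none}) := by
  obtain ⟨hd0, hd1⟩ := hd
  obtain ⟨K, hK⟩ := hlarge
  set 𝓛 : Set (List α) := {w : List α | reach δ 𝔰 w ≠ none} with h𝓛
  have ha1 : (1 : ℝ) < a := by
    have : (2 : ℝ) ≤ a := by exact_mod_cast ha
    linarith
  have ha0 : (0 : ℝ) < a := by linarith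
  have hla : (a : ℝ) ^ ((1 : ℝ) - d) < lam * a := by
    have heq : (a : ℝ) ^ ((1 : ℝ) - d) = (a : ℝ) ^ (-d) * a := by
      rw [sub_eq_neg_add, Real.rpow_add ha0, Real.rpow_one]
    rw [heq]
    exact mul_lt_mul_of_pos_right hlam ha0
  have h1lt : (1 : ℝ) < (a : ℝ) ^ ((1 : ℝ) - d) :=
    Real.one_lt_rpow_iff_of_pos ha0 |>.mpr (Or.inl ⟨ha1, by linarith⟩)
  set b : ℕ := ⌈lam * a⌉₊ with hbdef
  have hble : lam * a ≤ (b : ℝ) := Nat.le_ceil _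
  have hb1 : (1 : ℝ) < b := lt_of_le_of_lt' hble (lt_trans h1lt hla)
  have hb0 : (0 : ℝ) < b := by linarith
  set d' : ℝ := Real.logb a b with hd'def
  have hd' : 1 - d < d' :=
    (Real.lt_logb_iff_rpow_lt ha1 hb0).mpr (lt_of_lt_of_le hla hble)
  set c : ℝ := (b : ℝ) ^ (-(K : ℝ)) with hcdef
  have hc : 0 < c := Real.rpow_pos_of_pos hb0 _
  -- nonemptiness at every length
  have hpos : ∀ L : ℕ, 1 ≤ langCount 𝓛 L := by
    classical
    intro L
    induction L with
    | zero =>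
      have hrw : langCount 𝓛 0 =
          (Finset.univ.filter fun f : Fin 0 → α => List.ofFn f ∈ 𝓛).card := by
        unfold langCount; congr 1; exact Finset.filter_congr_decidable _ _ _
      rw [hrw]
      refine Finset.card_pos.mpr ⟨default, Finset.mem_filter.mpr ⟨Finset.mem_univ _, ?_⟩⟩
      show List.ofFn (default : Fin 0 → α) ∈ 𝓛
      simp [h𝓛, reach]
    | succ n ih =>
      have hst := step_count δ 𝔰 1 n (fun f t ht => hreach _ t ht)
      rw [one_mul] at hst
      exact le_trans ih hst
  -- growth beyond length K
  have hgrow : ∀ n : ℕ, b ^ n * langCount 𝓛 K ≤ langCount 𝓛 (K + n) := by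
    intro n
    induction n with
    | zero => simp
    | succ n ih =>
      have hst := step_count δ 𝔰 b (K + n) (fun f t ht => by
        refine Nat.ceil_le.mpr (hK (List.ofFn f) t ?_ ht)
        simp)
      calc b ^ (n + 1) * langCount 𝓛 K = b * (b ^ n * langCount 𝓛 K) := by ring
        _ ≤ b * langCount 𝓛 (K + n) := Nat.mul_le_mul_left b ih
        _ ≤ langCount 𝓛 (K + n + 1) := hst
        _ = langCount 𝓛 (K + (n + 1)) := by ring_nf
  have hmain : ∀ L : ℕ, K ≤ L → b ^ (L - K) ≤ langCount 𝓛 L := by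
    intro L hL
    have h1 := hgrow (L - K)
    rw [Nat.add_sub_cancel' hL] at h1
    calc b ^ (L - K) = b ^ (L - K) * 1 := (mul_one _).symm
      _ ≤ b ^ (L - K) * langCount 𝓛 K := Nat.mul_le_mul_left _ (hpos K)
      _ ≤ langCount 𝓛 L := h1
  -- the real-valued bound
  have hbound : ∀ L : ℕ, c * (a : ℝ) ^ (d' * (L : ℝ)) ≤ (langCount 𝓛 L : ℝ) := by
    intro L
    have hrw : c * (a : ℝ) ^ (d' * (L : ℝ)) = (b : ℝ) ^ ((L : ℝ) - K) := by
      rw [Real.rpow_mul ha0.le, Real.rpow_logb ha0 (ne_of_gt ha1) hb0, hcdef,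
        ← Real.rpow_add hb0, neg_add_eq_sub]
    rw [hrw]
    rcases le_or_gt K L with hKL | hKL
    · have h1 := hmain L hKL
      have h2 : ((L : ℝ) - K) = ((L - K : ℕ) : ℝ) := by
        rw [Nat.cast_sub hKL]
      rw [h2, Real.rpow_natCast]
      calc (b : ℝ) ^ (L - K) = ((b ^ (L - K) : ℕ) : ℝ) := by push_cast; ring
        _ ≤ (langCount 𝓛 L : ℝ) := by exact_mod_cast h1
    · have h1 : (b : ℝ) ^ ((L : ℝ) - K) ≤ (b : ℝ) ^ (0 : ℝ) := by
        apply Real.rpow_le_rpow_of_exponent_le hb1.le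
        have : (L : ℝ) < K := by exact_mod_cast hKL
        linarith
      rw [Real.rpow_zero] at h1
      have h2 : (1 : ℝ) ≤ (langCount 𝓛 L : ℝ) := by exact_mod_cast hpos L
      linarith
  refine ⟨d', hd', c, hc, hbound, fun A _ => ⟨c, hc, fun L _ => ?_⟩⟩
  rw [hcard]
  exact hbound L
end

section
/- Let a ≥ 2 and m ≥ 1 be natural numbers, d ∈ (0,1), and let λ be a real number with λ > a^(−m·d). Let B be a finite type and enc : B → List (Fin a) an injective map all of whose values have length m; extend enc to a map Enc on words over B by concatenation, Enc([b₁, …, b_ℓ]) = enc(b₁) ++ ⋯ ++ enc(b_ℓ). Suppose 𝓛̂ is a set of words over B such that for some c > 0 and every ℓ ∈ ℕ, 𝓛̂ contains at least c·(λ·a^m)^ℓ words of length ℓ. Then there exist a real d'' > 1 − d and c' > 0 such that for every L divisible by m, the image Enc '' 𝓛̂ contains at least c'·a^(d''·L) words of length L over Fin a; i.e., Enc '' 𝓛̂ has A_0(m)-density d''. -/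
lemma enc_inj_lists {a m : ℕ} (hm : 1 ≤ m) {B : Type*} (enc : B → List (Fin a))
    (henc : Function.Injective enc) (hlen : ∀ b : B, (enc b).length = m) :
    Function.Injective (fun l : List B => (l.map enc).flatten) := by
  intro l1 l2 h
  simp only at h
  induction l1 generalizing l2 with
  | nil =>
    cases l2 with
    | nil => rfl
    | cons b t =>
      exfalso
      simp only [List.map_nil, List.flatten_nil, List.map_cons, List.flatten_cons] at h
      have hL := congrArg List.length h
      simp [hlen b] at hL
      omega
  | cons b t ih =>
    cases l2 with
    | nil =>
      exfalso
      simp only [List.map_nil, List.flatten_nil, List.map_cons, List.flatten_cons] at h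
      have hL := congrArg List.length h
      simp [hlen b] at hL
      omega
    | cons b' t' =>
      simp only [List.map_cons, List.flatten_cons] at h
      have hl : (enc b).length = (enc b').length := by rw [hlen, hlen]
      obtain ⟨h1, h2⟩ := List.append_inj h hl
      rw [henc h1, ih h2]

lemma flatten_len {a m : ℕ} {B : Type*} (enc : B → List (Fin a))
    (hlen : ∀ b : B, (enc b).length = m) (l : List B) :
    ((l.map enc).flatten).length = m * l.length := by
  induction l with
  | nil => simp
  | cons b t ih =>
    simp [List.flatten_cons, ih, hlen b, Nat.mul_succ]
    ring

lemma count_le {a m : ℕ} (hm : 1 ≤ m) {B : Type*} [Fintype B] (enc : B → List (Fin a))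
    (henc : Function.Injective enc) (hlen : ∀ b : B, (enc b).length = m)
    (𝓛 : Set (List B)) (ℓ : ℕ) :
    langCount 𝓛 ℓ ≤ langCount ((fun l : List B => (l.map enc).flatten) '' 𝓛) (m * ℓ) := by
  classical
  unfold langCount
  set Enc := fun l : List B => (l.map enc).flatten with hEnc
  have hlenE : ∀ f : Fin ℓ → B, (Enc (List.ofFn f)).length = m * ℓ := fun f => by
    rw [hEnc]; simpa using flatten_len enc hlen (List.ofFn f)
  apply Finset.card_le_card_of_injOn
    (fun f i => (Enc (List.ofFn f)).get (Fin.cast (hlenE f).symm i))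
  · intro f hf
    simp only [Finset.mem_coe, Finset.mem_filter, Finset.mem_univ, true_and] at hf ⊢
    have : List.ofFn (fun i => (Enc (List.ofFn f)).get (Fin.cast (hlenE f).symm i))
        = Enc (List.ofFn f) := by
      apply List.ext_getElem
      · simp [hlenE f]
      · intro i h1 h2
        simp [List.getElem_ofFn]
    rw [this]
    exact ⟨List.ofFn f, hf, rfl⟩
  · intro f hf g hg hfg
    have : Enc (List.ofFn f) = Enc (List.ofFn g) := by
      apply List.ext_getElem
      · rw [hlenE, hlenE]
      · intro i h1 h2
        have := congrFun hfg ⟨i, by rw [hlenE] at h1; exact h1⟩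
        simpa using this
    exact List.ofFn_injective (enc_inj_lists hm enc henc hlen this)

/-- block recoding. Let `enc : B → List (Fin a)` be injective with
all values of length `m`, extended to words over `B` by concatenation. If `𝓛̂`
contains at least `c·(λ·a^m)^ℓ` words of length `ℓ` for every `ℓ` (for some
`c > 0`), where `λ > a^(−m·d)`, then the image language over `Fin a` has
`A_0(m)`-density `d''` for some `d'' > 1 − d`. -/
theorem stmt10 (a m : ℕ) (ha : 2 ≤ a) (hm : 1 ≤ m)
    (d : ℝ) (hd : d ∈ Set.Ioo (0 : ℝ) 1)
    (lam : ℝ) (hlam : (a : ℝ) ^ (-((m : ℝ) * d)) < lam)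
    (B : Type*) [Fintype B] (enc : B → List (Fin a))
    (henc : Function.Injective enc) (hlen : ∀ b : B, (enc b).length = m)
    (𝓛 : Set (List B)) (c : ℝ) (hc : 0 < c)
    (hgrow : ∀ ℓ : ℕ, c * (lam * (a : ℝ) ^ (m : ℕ)) ^ ℓ ≤ (langCount 𝓛 ℓ : ℝ)) :
    ∃ d'' : ℝ, 1 - d < d'' ∧
      HasADensity {L : ℕ | m ∣ L} d''
        ((fun l : List B => (l.map enc).flatten) '' 𝓛) := by
  have ha1 : (1 : ℝ) < a := by exact_mod_cast by omega
  have ha0 : (0 : ℝ) < a := by linarith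
  have hm0 : (0 : ℝ) < m := by exact_mod_cast hm
  have hlam0 : 0 < lam := lt_trans (Real.rpow_pos_of_pos ha0 _) hlam
  have hx0 : 0 < lam * (a : ℝ) ^ (m : ℕ) := by positivity
  set d'' : ℝ := Real.logb a (lam * (a : ℝ) ^ (m : ℕ)) / m with hd''
  have key : (a : ℝ) ^ ((m : ℝ) * d'') = lam * (a : ℝ) ^ (m : ℕ) := by
    rw [hd'', mul_div_cancel₀ _ (ne_of_gt hm0)]
    exact Real.rpow_logb ha0 (ne_of_gt ha1) hx0
  refine ⟨d'', ?_, c, hc, ?_⟩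
  · rw [hd'', lt_div_iff₀ hm0, Real.lt_logb_iff_rpow_lt ha1 hx0]
    have e1 : (a:ℝ) ^ ((1-d) * (m:ℝ)) = (a:ℝ)^(-((m:ℝ)*d)) * (a:ℝ)^(m:ℕ) := by
      rw [← Real.rpow_natCast (a:ℝ) m, ← Real.rpow_add ha0]
      ring_nf
    rw [e1]
    exact mul_lt_mul_of_pos_right hlam (by positivity)
  · intro L hL
    obtain ⟨ℓ, rfl⟩ := hL
    have h1 := hgrow ℓ
    have h2 := count_le hm enc henc hlen 𝓛 ℓ
    have heq : ((Fintype.card (Fin a)):ℝ) ^ (d'' * ((m*ℓ : ℕ):ℝ)) = (lam * (a:ℝ)^(m:ℕ))^ℓ := by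
      rw [Fintype.card_fin]
      push_cast
      rw [show d'' * ((m:ℝ)*(ℓ:ℝ)) = ((m:ℝ)*d'') * (ℓ:ℝ) by ring, Real.rpow_mul (le_of_lt ha0),
        key, Real.rpow_natCast]
    rw [heq]
    calc c * (lam * (a:ℝ)^(m:ℕ))^ℓ ≤ (langCount 𝓛 ℓ : ℝ) := h1
      _ ≤ _ := by exact_mod_cast h2
end
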